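/- Let n = 2m with m odd, q = 2^m, a ∈ F_{2^n} \ F_{2^m}, and b a non-cube in F_{2^n}. Then h(x) = a·Tr^n_m(b x^3) + a^q·Tr^n_m(b x^5 + b x^{4q+1}) is an APN function over F_{2^n}. -/

import Mathlib

set_option linter.unusedSectionVars false
set_option linter.unusedVariables false
set_option maxHeartbeats 4000000

open Finset Polynomial

section Aux

variable {F : Type*} [Field F] [CharP F 2] [Fintype F] {m : ℕ}






lemma frob_add (x y : F) : (x + y) ^ (2:ℕ) ^ m = x ^ (2:ℕ) ^ m + y ^ (2:ℕ) ^ m :=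
  add_pow_char_pow ..

lemma frob_frob (hF : Fintype.card F = 2 ^ (2 * m)) (x : F) :
    (x ^ (2:ℕ) ^ m) ^ (2:ℕ) ^ m = x := by
  rw [← pow_mul]
  have : (2:ℕ) ^ m * 2 ^ m = 2 ^ (2 * m) := by rw [← pow_add]; ring_nf
  rw [this, ← hF, FiniteField.pow_card]

lemma indep (hF : Fintype.card F = 2 ^ (2 * m)) {a : F} (ha : a ^ (2:ℕ) ^ m ≠ a)
    {r s : F} (hr : r ^ (2:ℕ) ^ m = r) (hs : s ^ (2:ℕ) ^ m = s)
    (hrs : r * a + s * a ^ (2:ℕ) ^ m = 0) : r = 0 ∧ s = 0 := by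
  have h0 : (2 : F) = 0 := CharTwo.two_eq_zero
  have ha0 : a ≠ 0 := by
    rintro rfl
    exact ha (zero_pow (by positivity))
  have h2 : r * a ^ (2:ℕ) ^ m + s * a = 0 := by
    have h := congrArg (· ^ (2:ℕ) ^ m) hrs
    simpa [frob_add, mul_pow, hr, hs, frob_frob hF, zero_pow, pow_ne_zero] using h
  have hrs' : (r + s) ^ 2 * a = 0 := by
    linear_combination r * hrs + s * h2 + (r * s * a - r * s * a ^ (2:ℕ) ^ m) * h0
  have hreqs : r = s := by
    rcases mul_eq_zero.mp hrs' with h | h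
    · have := pow_eq_zero_iff (n := 2) (by norm_num) |>.mp h
      linear_combination this - s * h0
    · exact absurd h ha0
  subst hreqs
  have : r * (a + a ^ (2:ℕ) ^ m) = 0 := by linear_combination hrs
  have haa : a + a ^ (2:ℕ) ^ m ≠ 0 := fun hc => ha (by linear_combination hc - a * h0)
  have : r = 0 := by
    rcases mul_eq_zero.mp this with h | h
    · exact h
    · exact absurd h haa
  exact ⟨this, this⟩






lemma three_dvd_pow_add_one (hodd : Odd m) : 3 ∣ 2 ^ m + 1 := by
  have : ((2 ^ m + 1 : ℕ) : ZMod 3) = 0 := by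
    push_cast
    have h2 : (2 : ZMod 3) = -1 := by decide
    rw [h2, hodd.neg_one_pow]
    ring
  exact (ZMod.natCast_eq_zero_iff ..).mp this

lemma cube_of_fixed (hm : 0 < m) (hodd : Odd m) {b : F} (hb : b ^ (2:ℕ) ^ m = b) :
    ∃ β : F, β ^ 3 = b := by
  rcases eq_or_ne b 0 with rfl | hb0
  · exact ⟨0, by norm_num⟩
  obtain ⟨k, hk⟩ := three_dvd_pow_add_one hodd
  have hk1 : 1 ≤ k := by nlinarith [Nat.one_le_two_pow (n := m)]
  refine ⟨b ^ (2 * k - 1), ?_⟩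
  have hexp : (2 * k - 1) * 3 + 1 = 2 ^ m * 2 := by omega
  have key : (b ^ (2 * k - 1)) ^ 3 * b = b * b := by
    rw [← pow_mul, ← pow_succ, hexp, pow_mul, hb, sq]
  exact mul_right_cancel₀ hb0 key

/-- helper : if `γ^3 = x^(3k) * x` then `x` is a cube -/
lemma cube_helper1 {x γ : F} (hx : x ≠ 0) {k : ℕ} (h : γ ^ 3 = x ^ (3 * k) * x) :
    ∃ β : F, β ^ 3 = x := by
  refine ⟨γ * (x ^ k)⁻¹, ?_⟩
  have hxk : (x ^ k) ≠ 0 := pow_ne_zero _ hx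
  field_simp
  rw [h, mul_comm 3 k, pow_mul]

/-- helper : if `γ^3 = x^(3k) * x^2` then `x` is a cube -/
lemma cube_helper2 {x γ : F} (hx : x ≠ 0) {k : ℕ} (h : γ ^ 3 = x ^ (3 * k) * x ^ 2) :
    ∃ β : F, β ^ 3 = x := by
  obtain ⟨δ, hδ⟩ : ∃ δ : F, δ ^ 3 = x ^ 2 := by
    refine ⟨γ * (x ^ k)⁻¹, ?_⟩
    have hxk : (x ^ k) ≠ 0 := pow_ne_zero _ hx
    field_simp
    rw [h, mul_comm 3 k, pow_mul]
  refine ⟨δ ^ 2 * x⁻¹, ?_⟩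
  field_simp
  linear_combination (δ ^ 3 + x ^ 2) * hδ






lemma frob_add' (k : ℕ) (x y : F) : (x + y) ^ (2:ℕ) ^ k = x ^ (2:ℕ) ^ k + y ^ (2:ℕ) ^ k :=
  add_pow_char_pow ..

lemma exists_AS (hm : 0 < m) (hF : Fintype.card F = 2 ^ (2 * m)) (c : F)
    (hc : c ^ (2:ℕ) ^ m = c) : ∃ u : F, u ^ 2 + u = c := by
  classical
  set g : F → F := fun y => ∑ i ∈ range (2 * m), y ^ (2:ℕ) ^ i with hg
  have hpowcard : ∀ u : F, u ^ (2:ℕ) ^ (2 * m) = u := by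
    intro u; rw [← hF, FiniteField.pow_card]
  -- g c = 0
  have hgc : g c = 0 := by
    rw [hg]
    simp only
    rw [two_mul, Finset.sum_range_add]
    have : ∀ i, c ^ (2:ℕ) ^ (m + i) = c ^ (2:ℕ) ^ i := by
      intro i
      rw [pow_add, mul_comm, pow_mul, ← pow_mul, mul_comm, pow_mul, hc]
    simp only [this]
    exact CharTwo.add_self_eq_zero _
  -- g (u^2+u) = 0
  have hgker : ∀ u : F, g (u ^ 2 + u) = 0 := by
    intro u
    have hterm : ∀ i : ℕ, (u ^ 2 + u) ^ (2:ℕ) ^ i = u ^ (2:ℕ) ^ (i + 1) + u ^ (2:ℕ) ^ i := by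
      intro i
      rw [frob_add' i, ← pow_mul, pow_succ, mul_comm ((2:ℕ)^i) 2]
    rw [hg]
    simp only [hterm]
    rw [Finset.sum_add_distrib]
    have h1 : ∑ i ∈ range (2 * m), u ^ (2:ℕ) ^ (i + 1)
        = ∑ i ∈ range (2 * m + 1), u ^ (2:ℕ) ^ i + u := by
      have := Finset.sum_range_succ' (fun i => u ^ (2:ℕ) ^ i) (2 * m)
      rw [this, pow_zero, pow_one]
      rw [add_assoc, CharTwo.add_self_eq_zero, add_zero]
    rw [h1, Finset.sum_range_succ, hpowcard]
    generalize (∑ i ∈ range (2 * m), u ^ (2:ℕ) ^ i) = S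
    have h0 : (2:F) = 0 := CharTwo.two_eq_zero
    linear_combination (S + u) * h0
  -- counting
  set P : Polynomial F := ∑ i ∈ range (2 * m), X ^ (2:ℕ) ^ i with hP
  have hPeval : ∀ y : F, P.eval y = g y := by
    intro y
    rw [hP, hg]
    simp [eval_finset_sum]
  have hPne : P ≠ 0 := by
    intro hP0
    have hco : P.coeff 1 = 1 := by
      rw [hP, finset_sum_coeff]
      rw [Finset.sum_eq_single 0]
      · simp
      · intro i _ hi
        rw [coeff_X_pow]
        have : (2:ℕ) ^ i ≠ 1 := by
          have : 1 < (2:ℕ) ^ i := Nat.one_lt_two_pow_iff.mpr hi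
          omega
        simp [Ne.symm this]
      · intro h0
        exact absurd (Finset.mem_range.mpr (by omega)) h0
    rw [hP0] at hco
    simp at hco
  have hPdeg : P.natDegree ≤ 2 ^ (2 * m - 1) := by
    rw [hP]
    refine natDegree_sum_le_of_forall_le _ _ (fun i hi => ?_)
    rw [natDegree_X_pow]
    exact Nat.pow_le_pow_right (by norm_num) (by have := Finset.mem_range.mp hi; omega)
  classical
  set S2 : Finset F := univ.filter (fun y => g y = 0) with hS2def
  have hS2 : S2.card ≤ 2 ^ (2 * m - 1) := by
    have hsub : S2 ⊆ P.roots.toFinset := by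
      intro y hy
      rw [Multiset.mem_toFinset, mem_roots']
      exact ⟨hPne, by rw [IsRoot, hPeval]; exact (Finset.mem_filter.mp hy).2⟩
    calc S2.card ≤ P.roots.toFinset.card := Finset.card_le_card hsub
      _ ≤ Multiset.card P.roots := Multiset.toFinset_card_le _
      _ ≤ P.natDegree := card_roots' P
      _ ≤ _ := hPdeg
  set S1 : Finset F := univ.image (fun u : F => u ^ 2 + u) with hS1def
  have hS1sub : S1 ⊆ S2 := by
    intro y hy
    obtain ⟨u, _, rfl⟩ := Finset.mem_image.mp hy
    exact Finset.mem_filter.mpr ⟨Finset.mem_univ _, hgker u⟩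
  have hfib : ∀ y ∈ S1, (univ.filter (fun x : F => x ^ 2 + x = y)).card ≤ 2 := by
    intro y hy
    obtain ⟨u, _, rfl⟩ := Finset.mem_image.mp hy
    have hsub2 : (univ.filter (fun x : F => x ^ 2 + x = u ^ 2 + u)) ⊆ {u, u + 1} := by
      intro x hx
      have hx2 := (Finset.mem_filter.mp hx).2
      have : (x + u) * (x + u + 1) = 0 := by
        have h0 : (2:F) = 0 := CharTwo.two_eq_zero
        linear_combination hx2 + (x * u + u ^ 2 + u) * h0
      rcases mul_eq_zero.mp this with h | h
      · have : x = u := by linear_combination h - u * CharTwo.two_eq_zero (R := F)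
        simp [this]
      · have : x = u + 1 := by
          have h0 : (2:F) = 0 := CharTwo.two_eq_zero
          linear_combination h - (u + 1) * h0
        simp [this]
    calc _ ≤ ({u, u+1} : Finset F).card := Finset.card_le_card hsub2
      _ ≤ 2 := Finset.card_insert_le _ _ |>.trans (by simp)
  have hcount : (univ : Finset F).card ≤ 2 * S1.card := by
    refine Finset.card_le_mul_card_image _ 2 ?_
    intro y hy
    exact hfib y hy
  have hpow : 2 * 2 ^ (2 * m - 1) = 2 ^ (2 * m) := by
    rw [← pow_succ']
    congr 1
    omega
  have hS1card : 2 ^ (2 * m - 1) ≤ S1.card := by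
    rw [Finset.card_univ, hF] at hcount
    omega
  have hS1eq : S1 = S2 := Finset.eq_of_subset_of_card_le hS1sub (le_trans hS2 hS1card)
  have hcS2 : c ∈ S2 := Finset.mem_filter.mpr ⟨Finset.mem_univ _, hgc⟩
  rw [← hS1eq] at hcS2
  obtain ⟨u, _, hu⟩ := Finset.mem_image.mp hcS2
  exact ⟨u, hu⟩



end Aux

theorem stmt_19 (m : ℕ) (hm : 0 < m) (hodd : Odd m)
    (a b : GaloisField 2 (2 * m))
    (ha : a ^ (2 ^ m) ≠ a)
    (hb : ¬ ∃ β : GaloisField 2 (2 * m), β ^ 3 = b)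
    (h : GaloisField 2 (2 * m) → GaloisField 2 (2 * m))
    (hh : ∀ x, h x = a * (b * x ^ 3 + (b * x ^ 3) ^ (2 ^ m)) +
        a ^ (2 ^ m) * ((b * x ^ 5 + b * x ^ (4 * 2 ^ m + 1)) +
          (b * x ^ 5 + b * x ^ (4 * 2 ^ m + 1)) ^ (2 ^ m))) :
    ∀ d : GaloisField 2 (2 * m), d ≠ 0 → ∀ β : GaloisField 2 (2 * m),
      {x : GaloisField 2 (2 * m) | h x + h (x + d) = β}.ncard ≤ 2 := by
  intro d hd β
  haveI : Fintype (GaloisField 2 (2 * m)) := Fintype.ofFinite _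
  have hcard : Fintype.card (GaloisField 2 (2 * m)) = 2 ^ (2 * m) := by
    rw [← Nat.card_eq_fintype_card]
    exact GaloisField.card 2 (2 * m) (by omega)
  have h0 : (2 : GaloisField 2 (2 * m)) = 0 := CharTwo.two_eq_zero
  have hφφ : ∀ x : GaloisField 2 (2 * m), (x ^ (2:ℕ) ^ m) ^ (2:ℕ) ^ m = x := frob_frob hcard
  -- normal form of h
  have hform : ∀ x : GaloisField 2 (2 * m), h x =
      a * (b * x ^ 3 + b ^ (2:ℕ) ^ m * (x ^ (2:ℕ) ^ m) ^ 3) +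
      a ^ (2:ℕ) ^ m * (b * x ^ 5 + b * (x ^ (2:ℕ) ^ m) ^ 4 * x +
        b ^ (2:ℕ) ^ m * (x ^ (2:ℕ) ^ m) ^ 5 + b ^ (2:ℕ) ^ m * x ^ 4 * x ^ (2:ℕ) ^ m) := by
    intro x
    rw [hh x]
    have e0 : x ^ (4 * 2 ^ m + 1) = (x ^ (2:ℕ) ^ m) ^ 4 * x := by
      rw [pow_succ, mul_comm 4 (2 ^ m), pow_mul]
    have e1 : (b * x ^ 3) ^ (2:ℕ) ^ m = b ^ (2:ℕ) ^ m * (x ^ (2:ℕ) ^ m) ^ 3 := by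
      rw [mul_pow, pow_right_comm]
    have e2 : (b * x ^ 5 + b * ((x ^ (2:ℕ) ^ m) ^ 4 * x)) ^ (2:ℕ) ^ m
        = b ^ (2:ℕ) ^ m * (x ^ (2:ℕ) ^ m) ^ 5
          + b ^ (2:ℕ) ^ m * x ^ 4 * x ^ (2:ℕ) ^ m := by
      rw [frob_add, mul_pow, mul_pow, mul_pow, pow_right_comm x 5,
        pow_right_comm (x ^ (2:ℕ) ^ m) 4, hφφ x]
      ring
    rw [e0, e1, e2]
    ring
  -- preliminaries
  have hb0 : b ≠ 0 := fun hc => hb ⟨0, by rw [hc]; ring⟩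
  have hbq : b ^ (2:ℕ) ^ m ≠ b := fun hc => hb (cube_of_fixed hm hodd hc)
  have hTb : b + b ^ (2:ℕ) ^ m ≠ 0 := fun hc => hbq (by linear_combination hc - b * h0)
  have hbq0 : b ^ (2:ℕ) ^ m ≠ 0 := pow_ne_zero _ hb0
  obtain ⟨k, hk⟩ := three_dvd_pow_add_one hodd
  have hk1 : 1 ≤ k := by nlinarith [Nat.one_le_two_pow (n := m)]
  have s2 : ∀ u : GaloisField 2 (2 * m), (u ^ 2) ^ (2:ℕ) ^ m = (u ^ (2:ℕ) ^ m) ^ 2 := fun u => pow_right_comm u 2 _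
  have s3 : ∀ u : GaloisField 2 (2 * m), (u ^ 3) ^ (2:ℕ) ^ m = (u ^ (2:ℕ) ^ m) ^ 3 := fun u => pow_right_comm u 3 _
  have s4 : ∀ u : GaloisField 2 (2 * m), (u ^ 4) ^ (2:ℕ) ^ m = (u ^ (2:ℕ) ^ m) ^ 4 := fun u => pow_right_comm u 4 _
  have s5 : ∀ u : GaloisField 2 (2 * m), (u ^ 5) ^ (2:ℕ) ^ m = (u ^ (2:ℕ) ^ m) ^ 5 := fun u => pow_right_comm u 5 _
  have key : ∀ z : GaloisField 2 (2 * m), h z + h (z + d) + h d = 0 → z = 0 ∨ z = d := by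
    intro z hz
    rw [hform z, hform (z + d), hform d, frob_add z d] at hz
    have hz' : (b * (z^2*d + z*d^2) + b ^ 2 ^ m * ((z ^ 2 ^ m)^2 * d ^ 2 ^ m + z ^ 2 ^ m * (d ^ 2 ^ m)^2)) * a
        + (b * (z^4*d + z*d^4 + (z ^ 2 ^ m)^4*d + z*(d ^ 2 ^ m)^4)
          + b ^ 2 ^ m * ((z ^ 2 ^ m)^4 * d ^ 2 ^ m + z ^ 2 ^ m * (d ^ 2 ^ m)^4 + z^4 * d ^ 2 ^ m + z ^ 2 ^ m * d^4)) * a ^ 2 ^ m = 0 := by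
      linear_combination hz + ((-1)*(a ^ 2 ^ m)*(b ^ 2 ^ m)*(z ^ 2 ^ m)^5 + (-1)*(a ^ 2 ^ m)*(b ^ 2 ^ m)*z^4*(z ^ 2 ^ m) + (-2)*(a ^ 2 ^ m)*(b ^ 2 ^ m)*(d ^ 2 ^ m)*(z ^ 2 ^ m)^4 + (-5)*(a ^ 2 ^ m)*(b ^ 2 ^ m)*(d ^ 2 ^ m)^2*(z ^ 2 ^ m)^3 + (-5)*(a ^ 2 ^ m)*(b ^ 2 ^ m)*(d ^ 2 ^ m)^3*(z ^ 2 ^ m)^2 + (-2)*(a ^ 2 ^ m)*(b ^ 2 ^ m)*(d ^ 2 ^ m)^4*(z ^ 2 ^ m) + (-1)*(a ^ 2 ^ m)*(b ^ 2 ^ m)*(d ^ 2 ^ m)^5 + (-2)*(a ^ 2 ^ m)*(b ^ 2 ^ m)*d*z^3*(z ^ 2 ^ m) + (-2)*(a ^ 2 ^ m)*(b ^ 2 ^ m)*d*(d ^ 2 ^ m)*z^3 + (-3)*(a ^ 2 ^ m)*(b ^ 2 ^ m)*d^2*z^2*(z ^ 2 ^ m) + (-3)*(a ^ 2 ^ m)*(b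 ^ 2 ^ m)*d^2*(d ^ 2 ^ m)*z^2 + (-2)*(a ^ 2 ^ m)*(b ^ 2 ^ m)*d^3*z*(z ^ 2 ^ m) + (-2)*(a ^ 2 ^ m)*(b ^ 2 ^ m)*d^3*(d ^ 2 ^ m)*z + (-1)*(a ^ 2 ^ m)*(b ^ 2 ^ m)*d^4*(d ^ 2 ^ m) + (-1)*(a ^ 2 ^ m)*b*z*(z ^ 2 ^ m)^4 + (-1)*(a ^ 2 ^ m)*b*z^5 + (-2)*(a ^ 2 ^ m)*b*(d ^ 2 ^ m)*z*(z ^ 2 ^ m)^3 + (-3)*(a ^ 2 ^ m)*b*(d ^ 2 ^ m)^2*z*(z ^ 2 ^ m)^2 + (-2)*(a ^ 2 ^ m)*b*(d ^ 2 ^ m)^3*z*(z ^ 2 ^ m) + (-2)*(a ^ 2 ^ m)*b*d*z^4 + (-2)*(a ^ 2 ^ m)*b*d*(d ^ 2 ^ m)*(z ^ 2 ^ m)^3 + (-3)*(a ^ 2 ^ m)*b*d*(d ^ 2 ^ m)^2*(z ^ 2 ^ m)^2 + (-2)*(a ^ 2 ^ m)*b*d*(d ^ 2 ^ m)^3*(z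 ^ 2 ^ m) + (-1)*(a ^ 2 ^ m)*b*d*(d ^ 2 ^ m)^4 + (-5)*(a ^ 2 ^ m)*b*d^2*z^3 + (-5)*(a ^ 2 ^ m)*b*d^3*z^2 + (-2)*(a ^ 2 ^ m)*b*d^4*z + (-1)*(a ^ 2 ^ m)*b*d^5 + (-1)*a*(b ^ 2 ^ m)*(z ^ 2 ^ m)^3 + (-1)*a*(b ^ 2 ^ m)*(d ^ 2 ^ m)*(z ^ 2 ^ m)^2 + (-1)*a*(b ^ 2 ^ m)*(d ^ 2 ^ m)^2*(z ^ 2 ^ m) + (-1)*a*(b ^ 2 ^ m)*(d ^ 2 ^ m)^3 + (-1)*a*b*z^3 + (-1)*a*b*d*z^2 + (-1)*a*b*d^2*z + (-1)*a*b*d^3) * h0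
    have hT1fix : (b * (z^2*d + z*d^2) + b ^ 2 ^ m * ((z ^ 2 ^ m)^2 * d ^ 2 ^ m + z ^ 2 ^ m * (d ^ 2 ^ m)^2)) ^ (2:ℕ) ^ m
        = (b * (z^2*d + z*d^2) + b ^ 2 ^ m * ((z ^ 2 ^ m)^2 * d ^ 2 ^ m + z ^ 2 ^ m * (d ^ 2 ^ m)^2)) := by
      simp only [frob_add, mul_pow, s2, s3, s4, s5, hφφ]
      ring
    have hT2fix : (b * (z^4*d + z*d^4 + (z ^ 2 ^ m)^4*d + z*(d ^ 2 ^ m)^4)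
          + b ^ 2 ^ m * ((z ^ 2 ^ m)^4 * d ^ 2 ^ m + z ^ 2 ^ m * (d ^ 2 ^ m)^4 + z^4 * d ^ 2 ^ m + z ^ 2 ^ m * d^4)) ^ (2:ℕ) ^ m
        = (b * (z^4*d + z*d^4 + (z ^ 2 ^ m)^4*d + z*(d ^ 2 ^ m)^4)
          + b ^ 2 ^ m * ((z ^ 2 ^ m)^4 * d ^ 2 ^ m + z ^ 2 ^ m * (d ^ 2 ^ m)^4 + z^4 * d ^ 2 ^ m + z ^ 2 ^ m * d^4)) := by
      simp only [frob_add, mul_pow, s2, s3, s4, s5, hφφ]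
      ring
    obtain ⟨hT1, hT2⟩ := indep hcard ha hT1fix hT2fix hz'
    clear hz hz' hT1fix hT2fix
    by_cases hdq : d ^ (2:ℕ) ^ m = d
    · -- d in the subfield
      rw [hdq] at hT2 hT1
      have h4 : d * ((b + b ^ 2 ^ m) * (z + z ^ 2 ^ m) ^ 4) = 0 := by
        linear_combination hT2 + ((2)*(b ^ 2 ^ m)*d*z*(z ^ 2 ^ m)^3 + (3)*(b ^ 2 ^ m)*d*z^2*(z ^ 2 ^ m)^2 + (2)*(b ^ 2 ^ m)*d*z^3*(z ^ 2 ^ m) + (-1)*(b ^ 2 ^ m)*d^4*(z ^ 2 ^ m) + (2)*b*d*z*(z ^ 2 ^ m)^3 + (3)*b*d*z^2*(z ^ 2 ^ m)^2 + (2)*b*d*z^3*(z ^ 2 ^ m) + (-1)*b*d^4*z) * h0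
      have hzfix : z ^ (2:ℕ) ^ m = z := by
        rcases mul_eq_zero.mp h4 with hc | hc
        · exact absurd hc hd
        rcases mul_eq_zero.mp hc with hc2 | hc2
        · exact absurd hc2 hTb
        have := pow_eq_zero_iff (n := 4) (by norm_num) |>.mp hc2
        linear_combination this - z * h0
      rw [hzfix] at hT1
      have hzz : (b + b ^ 2 ^ m) * (d * (z * (z + d))) = 0 := by
        linear_combination hT1
      rcases mul_eq_zero.mp hzz with hc | hc
      · exact absurd hc hTb
      rcases mul_eq_zero.mp hc with hc2 | hc2
      · exact absurd hc2 hd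
      rcases mul_eq_zero.mp hc2 with hc3 | hc3
      · exact Or.inl hc3
      · exact Or.inr (by linear_combination hc3 - d * h0)
    · -- d outside the subfield
      have he : d + d ^ (2:ℕ) ^ m ≠ 0 := fun hc => hdq (by linear_combination hc - d * h0)
      obtain ⟨t, ht, hte⟩ : ∃ t : GaloisField 2 (2 * m), t ^ (2:ℕ) ^ m = t ∧ t * (d + d ^ (2:ℕ) ^ m) = z + z ^ (2:ℕ) ^ m := by
        refine ⟨(z + z ^ (2:ℕ) ^ m) * (d + d ^ (2:ℕ) ^ m)⁻¹, ?_, ?_⟩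
        · simp only [mul_pow, inv_pow, frob_add, hφφ]
          ring
        · rw [mul_assoc, inv_mul_cancel₀ he, mul_one]
      obtain ⟨s, hsz⟩ : ∃ s : GaloisField 2 (2 * m), z = s + t * d := ⟨z + t * d, by linear_combination -(t*d) * h0⟩
      have hzqe : z ^ (2:ℕ) ^ m = s + t * d ^ (2:ℕ) ^ m := by
        linear_combination - hsz - hte - s * h0
      rw [hzqe] at hT1 hT2
      rw [hsz] at hT1 hT2
      -- now hT1 hT2 are equations in s, t
      have hI : s * (b + b ^ 2 ^ m) + (t^4 + t) * (b*d + b ^ 2 ^ m * d ^ 2 ^ m) = 0 := by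
        have h4 : (d + d ^ 2 ^ m)^4 * (s * (b + b ^ 2 ^ m) + (t^4 + t) * (b*d + b ^ 2 ^ m * d ^ 2 ^ m)) = 0 := by
          linear_combination hT2 + ((-1)*(b ^ 2 ^ m)*(d ^ 2 ^ m)*s^4 + (-2)*(b ^ 2 ^ m)*(d ^ 2 ^ m)^2*s^3*t + (-3)*(b ^ 2 ^ m)*(d ^ 2 ^ m)^3*s^2*t^2 + (-2)*(b ^ 2 ^ m)*(d ^ 2 ^ m)^4*s*t^3 + (-2)*(b ^ 2 ^ m)*d*(d ^ 2 ^ m)*s^3*t + (2)*(b ^ 2 ^ m)*d*(d ^ 2 ^ m)^3*s + (2)*(b ^ 2 ^ m)*d*(d ^ 2 ^ m)^4*t + (2)*(b ^ 2 ^ m)*d*(d ^ 2 ^ m)^4*t^4 + (-3)*(b ^ 2 ^ m)*d^2*(d ^ 2 ^ m)*s^2*t^2 + (3)*(b ^ 2 ^ m)*d^2*(d ^ 2 ^ m)^2*s + (3)*(b ^ 2 ^ m)*d^2*(d ^ 2 ^ m)^3*t + (3)*(b ^ 2 ^ m)*d^2*(d ^ 2 ^ m)^3*t^4 + (2)*(b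 ^ 2 ^ m)*d^3*(d ^ 2 ^ m)*s + (-2)*(b ^ 2 ^ m)*d^3*(d ^ 2 ^ m)*s*t^3 + (2)*(b ^ 2 ^ m)*d^3*(d ^ 2 ^ m)^2*t + (2)*(b ^ 2 ^ m)*d^3*(d ^ 2 ^ m)^2*t^4 + (-1)*b*d*s^4 + (-2)*b*d*(d ^ 2 ^ m)*s^3*t + (-3)*b*d*(d ^ 2 ^ m)^2*s^2*t^2 + (2)*b*d*(d ^ 2 ^ m)^3*s + (-2)*b*d*(d ^ 2 ^ m)^3*s*t^3 + (-2)*b*d^2*s^3*t + (3)*b*d^2*(d ^ 2 ^ m)^2*s + (2)*b*d^2*(d ^ 2 ^ m)^3*t + (2)*b*d^2*(d ^ 2 ^ m)^3*t^4 + (-3)*b*d^3*s^2*t^2 + (2)*b*d^3*(d ^ 2 ^ m)*s + (3)*b*d^3*(d ^ 2 ^ m)^2*t + (3)*b*d^3*(d ^ 2 ^ m)^2*t^4 + (-2)*b*d^4*s*t^3 + (2)*b*d^4*(d ^ 2 ^ m)*t + (2)*b*d^4*(d ^ 2 ^ m)*t^4) * h0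
        rcases mul_eq_zero.mp h4 with hc | hc
        · exact absurd (pow_eq_zero_iff (n := 4) (by norm_num) |>.mp hc) he
        · exact hc
      have hII : s^2 * (b*d + b ^ 2 ^ m * d ^ 2 ^ m) + s * (b*d^2 + b ^ 2 ^ m * (d ^ 2 ^ m)^2)
          + (t^2 + t) * (b*d^3 + b ^ 2 ^ m * (d ^ 2 ^ m)^3) = 0 := by
        linear_combination hT1 + ((-1)*(b ^ 2 ^ m)*(d ^ 2 ^ m)^2*s*t + (-1)*b*d^2*s*t) * h0
      by_cases hw0 : t^2 + t = 0
      · -- good case : t = 0 or 1, s = 0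
        have hs0 : s * (b + b ^ 2 ^ m) = 0 := by
          linear_combination hI - (t^2 + t + 1) * (b*d + b ^ 2 ^ m * d ^ 2 ^ m) * hw0
            + ((t^3 + t^2) * (b*d + b ^ 2 ^ m * d ^ 2 ^ m)) * h0
        have hs00 : s = 0 := by
          rcases mul_eq_zero.mp hs0 with hc | hc
          · exact hc
          · exact absurd hc hTb
        have ht01 : t = 0 ∨ t = 1 := by
          have : t * (t + 1) = 0 := by linear_combination hw0
          rcases mul_eq_zero.mp this with hc | hc
          · exact Or.inl hc
          · exact Or.inr (by linear_combination hc - h0)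
        rcases ht01 with hc | hc
        · exact Or.inl (by rw [hsz, hs00, hc]; ring)
        · exact Or.inr (by rw [hsz, hs00, hc]; ring)
      · exfalso
        have hw : (t^2 + t) * ((b*d + b ^ 2 ^ m * d ^ 2 ^ m)^3 * (t^2+t)^3
            + (b*d + b ^ 2 ^ m * d ^ 2 ^ m) * (b * b ^ 2 ^ m) * (d + d ^ 2 ^ m)^2 * (t^2+t)
            + (b + b ^ 2 ^ m) * (b * b ^ 2 ^ m) * (d + d ^ 2 ^ m)^3) = 0 := by
          linear_combination ((b ^ 2 ^ m)^2*(d ^ 2 ^ m)*s + (b ^ 2 ^ m)^2*(d ^ 2 ^ m)^2 + (b ^ 2 ^ m)^2*(d ^ 2 ^ m)^2*t + (2)*(b ^ 2 ^ m)^2*(d ^ 2 ^ m)^2*t^2 + (2)*(b ^ 2 ^ m)^2*(d ^ 2 ^ m)^2*t^3 + (b ^ 2 ^ m)^2*(d ^ 2 ^ m)^2*t^4 + b*(b ^ 2 ^ m)*(d ^ 2 ^ m)*s + b*(b ^ 2 ^ m)*(d ^ 2 ^ m)^2 + b*(b ^ 2 ^ m)*d*s + (2)*b*(b ^ 2 ^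 m)*d*(d ^ 2 ^ m)*t + (4)*b*(b ^ 2 ^ m)*d*(d ^ 2 ^ m)*t^2 + (4)*b*(b ^ 2 ^ m)*d*(d ^ 2 ^ m)*t^3 + (2)*b*(b ^ 2 ^ m)*d*(d ^ 2 ^ m)*t^4 + b*(b ^ 2 ^ m)*d^2 + b^2*d*s + b^2*d^2 + b^2*d^2*t + (2)*b^2*d^2*t^2 + (2)*b^2*d^2*t^3 + b^2*d^2*t^4) * hI + ((b + b ^ 2 ^ m)^2) * hII + ((-1)*(b ^ 2 ^ m)^3*(d ^ 2 ^ m)*s^2 + (-1)*(b ^ 2 ^ m)^3*(d ^ 2 ^ m)^2*s + (-1)*(b ^ 2 ^ m)^3*(d ^ 2 ^ m)^2*s*t + (-1)*(b ^ 2 ^ m)^3*(d ^ 2 ^ m)^2*s*t^2 + (-1)*(b ^ 2 ^ m)^3*(d ^ 2 ^ m)^2*s*t^3 + (-1)*(b ^ 2 ^ m)^3*(d ^ 2 ^ m)^2*s*t^4 + (-1)*(b ^ 2 ^ m)^3*(d ^ 2 ^ m)^3*t + (-1)*(b ^ 2 ^ m)^3*(d ^ 2 ^ m)^3*t^2 +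 (-1)*(b ^ 2 ^ m)^3*(d ^ 2 ^ m)^3*t^3 + (-1)*(b ^ 2 ^ m)^3*(d ^ 2 ^ m)^3*t^4 + (b ^ 2 ^ m)^3*(d ^ 2 ^ m)^3*t^5 + (2)*(b ^ 2 ^ m)^3*(d ^ 2 ^ m)^3*t^6 + (b ^ 2 ^ m)^3*(d ^ 2 ^ m)^3*t^7 + (-2)*b*(b ^ 2 ^ m)^2*(d ^ 2 ^ m)*s^2 + (-2)*b*(b ^ 2 ^ m)^2*(d ^ 2 ^ m)^2*s + (-1)*b*(b ^ 2 ^ m)^2*(d ^ 2 ^ m)^2*s*t + (-1)*b*(b ^ 2 ^ m)^2*(d ^ 2 ^ m)^2*s*t^2 + (-1)*b*(b ^ 2 ^ m)^2*(d ^ 2 ^ m)^2*s*t^3 + (-1)*b*(b ^ 2 ^ m)^2*(d ^ 2 ^ m)^2*s*t^4 + (-1)*b*(b ^ 2 ^ m)^2*(d ^ 2 ^ m)^3*t + b*(b ^ 2 ^ m)^2*(d ^ 2 ^ m)^3*t^3 + (-1)*b*(b ^ 2 ^ m)^2*d*s^2 + (-2)*b*(b ^ 2 ^ m)^2*d*(d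 ^ 2 ^ m)*s*t + (-2)*b*(b ^ 2 ^ m)^2*d*(d ^ 2 ^ m)*s*t^2 + (-2)*b*(b ^ 2 ^ m)^2*d*(d ^ 2 ^ m)*s*t^3 + (-2)*b*(b ^ 2 ^ m)^2*d*(d ^ 2 ^ m)*s*t^4 + b*(b ^ 2 ^ m)^2*d*(d ^ 2 ^ m)^2*t + b*(b ^ 2 ^ m)^2*d*(d ^ 2 ^ m)^2*t^2 + (-1)*b*(b ^ 2 ^ m)^2*d*(d ^ 2 ^ m)^2*t^3 + (-1)*b*(b ^ 2 ^ m)^2*d*(d ^ 2 ^ m)^2*t^4 + (3)*b*(b ^ 2 ^ m)^2*d*(d ^ 2 ^ m)^2*t^5 + (6)*b*(b ^ 2 ^ m)^2*d*(d ^ 2 ^ m)^2*t^6 + (3)*b*(b ^ 2 ^ m)^2*d*(d ^ 2 ^ m)^2*t^7 + (-1)*b*(b ^ 2 ^ m)^2*d^2*s + b*(b ^ 2 ^ m)^2*d^2*(d ^ 2 ^ m)*t + (2)*b*(b ^ 2 ^ m)^2*d^2*(d ^ 2 ^ m)*t^2 + b*(b ^ 2 ^ m)^2*d^2*(d ^ 2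 ^ m)*t^3 + (-1)*b^2*(b ^ 2 ^ m)*(d ^ 2 ^ m)*s^2 + (-1)*b^2*(b ^ 2 ^ m)*(d ^ 2 ^ m)^2*s + (-2)*b^2*(b ^ 2 ^ m)*d*s^2 + (-2)*b^2*(b ^ 2 ^ m)*d*(d ^ 2 ^ m)*s*t + (-2)*b^2*(b ^ 2 ^ m)*d*(d ^ 2 ^ m)*s*t^2 + (-2)*b^2*(b ^ 2 ^ m)*d*(d ^ 2 ^ m)*s*t^3 + (-2)*b^2*(b ^ 2 ^ m)*d*(d ^ 2 ^ m)*s*t^4 + b^2*(b ^ 2 ^ m)*d*(d ^ 2 ^ m)^2*t + (2)*b^2*(b ^ 2 ^ m)*d*(d ^ 2 ^ m)^2*t^2 + b^2*(b ^ 2 ^ m)*d*(d ^ 2 ^ m)^2*t^3 + (-2)*b^2*(b ^ 2 ^ m)*d^2*s + (-1)*b^2*(b ^ 2 ^ m)*d^2*s*t + (-1)*b^2*(b ^ 2 ^ m)*d^2*s*t^2 + (-1)*b^2*(b ^ 2 ^ m)*d^2*s*t^3 + (-1)*b^2*(b ^ 2 ^ m)*d^2*s*t^4 + b^2*(b ^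 2 ^ m)*d^2*(d ^ 2 ^ m)*t + b^2*(b ^ 2 ^ m)*d^2*(d ^ 2 ^ m)*t^2 + (-1)*b^2*(b ^ 2 ^ m)*d^2*(d ^ 2 ^ m)*t^3 + (-1)*b^2*(b ^ 2 ^ m)*d^2*(d ^ 2 ^ m)*t^4 + (3)*b^2*(b ^ 2 ^ m)*d^2*(d ^ 2 ^ m)*t^5 + (6)*b^2*(b ^ 2 ^ m)*d^2*(d ^ 2 ^ m)*t^6 + (3)*b^2*(b ^ 2 ^ m)*d^2*(d ^ 2 ^ m)*t^7 + (-1)*b^2*(b ^ 2 ^ m)*d^3*t + b^2*(b ^ 2 ^ m)*d^3*t^3 + (-1)*b^3*d*s^2 + (-1)*b^3*d^2*s + (-1)*b^3*d^2*s*t + (-1)*b^3*d^2*s*t^2 + (-1)*b^3*d^2*s*t^3 + (-1)*b^3*d^2*s*t^4 + (-1)*b^3*d^3*t + (-1)*b^3*d^3*t^2 + (-1)*b^3*d^3*t^3 + (-1)*b^3*d^3*t^4 + b^3*d^3*t^5 + (2)*b^3*d^3*t^6 + b^3*d^3*t^7) * h0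
        have hstuff := (mul_eq_zero.mp hw).resolve_left hw0
        by_cases hA : b*d + b ^ 2 ^ m * d ^ 2 ^ m = 0
        · have hcontra : (b + b ^ 2 ^ m) * ((b * b ^ 2 ^ m) * (d + d ^ 2 ^ m)^3) = 0 := by
            linear_combination hstuff - ((b*d + b ^ 2 ^ m * d ^ 2 ^ m)^2 * (t^2+t)^3
              + (b * b ^ 2 ^ m) * (d + d ^ 2 ^ m)^2 * (t^2+t)) * hA
          rcases mul_eq_zero.mp hcontra with hc | hc
          · exact hTb hc
          rcases mul_eq_zero.mp hc with hc2 | hc2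
          · rcases mul_eq_zero.mp hc2 with hc3 | hc3
            · exact hb0 hc3
            · exact hbq0 hc3
          · exact pow_ne_zero 3 he hc2
        · obtain ⟨σ, hσfix, hσe⟩ : ∃ σ : GaloisField 2 (2 * m), σ ^ (2:ℕ) ^ m = σ ∧
              σ * (d + d ^ (2:ℕ) ^ m) = (b*d + b ^ (2:ℕ) ^ m * d ^ (2:ℕ) ^ m) * (t^2 + t) := by
            refine ⟨(b*d + b ^ (2:ℕ) ^ m * d ^ (2:ℕ) ^ m) * (t^2 + t) * (d + d ^ (2:ℕ) ^ m)⁻¹, ?_, ?_⟩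
            · simp only [mul_pow, inv_pow, frob_add, s2, hφφ, ht]
              ring
            · rw [mul_assoc, inv_mul_cancel₀ he, mul_one]
          have hσ0 : σ ≠ 0 := by
            intro hc
            rw [hc, zero_mul] at hσe
            rcases mul_eq_zero.mp hσe.symm with hc2 | hc2
            · exact hA hc2
            · exact hw0 hc2
          have hσcube : σ^3 + (b * b ^ 2 ^ m) * σ + (b * b ^ 2 ^ m) * (b + b ^ 2 ^ m) = 0 := by
            have h3 : (d + d ^ 2 ^ m)^3 * (σ^3 + (b * b ^ 2 ^ m) * σ + (b * b ^ 2 ^ m) * (b + b ^ 2 ^ m)) = 0 := by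
              linear_combination hstuff + ((d ^ 2 ^ m)^2*σ^2 + (2)*d*(d ^ 2 ^ m)*σ^2 + d^2*σ^2 + (b ^ 2 ^ m)*(d ^ 2 ^ m)^2*t*σ + (b ^ 2 ^ m)*(d ^ 2 ^ m)^2*t^2*σ + (b ^ 2 ^ m)*d*(d ^ 2 ^ m)*t*σ + (b ^ 2 ^ m)*d*(d ^ 2 ^ m)*t^2*σ + (b ^ 2 ^ m)^2*(d ^ 2 ^ m)^2*t^2 + (2)*(b ^ 2 ^ m)^2*(d ^ 2 ^ m)^2*t^3 + (b ^ 2 ^ m)^2*(d ^ 2 ^ m)^2*t^4 + b*d*(d ^ 2 ^ m)*t*σ + b*d*(d ^ 2 ^ m)*t^2*σ + b*d^2*t*σ + b*d^2*t^2*σ + b*(b ^ 2 ^ m)*(d ^ 2 ^ m)^2 + (2)*b*(b ^ 2 ^ m)*d*(d ^ 2 ^ m) + (2)*b*(b ^ 2 ^ m)*d*(d ^ 2 ^ m)*t^2 + (4)*b*(b ^ 2 ^ m)*d*(d ^ 2 ^ m)*t^3 + (2)*b*(b ^ 2 ^ m)*d*(d ^ 2 ^ m)*t^4 + b*(b ^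 2 ^ m)*d^2 + b^2*d^2*t^2 + (2)*b^2*d^2*t^3 + b^2*d^2*t^4) * hσe
            rcases mul_eq_zero.mp h3 with hc | hc
            · exact absurd (pow_eq_zero_iff (n := 3) (by norm_num) |>.mp hc) he
            · exact hc
          obtain ⟨c, hcσ⟩ : ∃ c : GaloisField 2 (2 * m), c * σ^2 = b * b ^ (2:ℕ) ^ m :=
            ⟨b * b ^ (2:ℕ) ^ m * (σ^2)⁻¹, by
              rw [mul_assoc, inv_mul_cancel₀ (pow_ne_zero 2 hσ0), mul_one]⟩
          have hcfix : c ^ (2:ℕ) ^ m = c := by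
            have h1 : c = b * b ^ (2:ℕ) ^ m * (σ^2)⁻¹ := by
              field_simp at hcσ ⊢
              linear_combination hcσ
            rw [h1]
            simp only [mul_pow, inv_pow, s2, hφφ, hσfix]
            ring
          obtain ⟨u, hu⟩ := exists_AS hm hcard c hcfix
          have hv : (σ*u)^2 + σ*(σ*u) + b * b ^ 2 ^ m = 0 := by
            linear_combination σ^2 * hu + hcσ + (b * b ^ 2 ^ m) * h0
          have hv0 : σ*u ≠ 0 := by
            intro hc
            rw [hc] at hv
            have : b * b ^ 2 ^ m = 0 := by linear_combination hv
            rcases mul_eq_zero.mp this with hc2 | hc2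
            · exact hb0 hc2
            · exact hbq0 hc2
          have hvv : ((σ*u)^3 + (b * b ^ 2 ^ m) * b) * ((σ*u)^3 + (b * b ^ 2 ^ m) * b ^ 2 ^ m) = 0 := by
            linear_combination (σ^4 + (σ*u)*σ^3 + (σ*u)^2*σ^2 + (σ*u)^3*σ + (σ*u)^4 + b*(b ^ 2 ^ m)*σ^2 + b*(b ^ 2 ^ m)*(σ*u)^2 + b*(b ^ 2 ^ m)^2*σ + b*(b ^ 2 ^ m)^2*(σ*u) + b^2*(b ^ 2 ^ m)*σ + b^2*(b ^ 2 ^ m)*(σ*u) + b^2*(b ^ 2 ^ m)^2) * hv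
              + ((σ*u)*σ^2 + b*(b ^ 2 ^ m)*σ + b*(b ^ 2 ^ m)*(σ*u)) * hσcube
              + ((-1)*(σ*u)*σ^5 + (-1)*(σ*u)^2*σ^4 + (-1)*(σ*u)^3*σ^3 + (-1)*(σ*u)^4*σ^2 + (-1)*(σ*u)^5*σ + (-1)*b*(b ^ 2 ^ m)*σ^4 + (-2)*b*(b ^ 2 ^ m)*(σ*u)*σ^3 + (-1)*b*(b ^ 2 ^ m)*(σ*u)^2*σ^2 + (-1)*b*(b ^ 2 ^ m)*(σ*u)^3*σ + (-1)*b*(b ^ 2 ^ m)*(σ*u)^4 + (-1)*b*(b ^ 2 ^ m)^2*(σ*u)*σ^2 + (-1)*b*(b ^ 2 ^ m)^2*(σ*u)^2*σ + (-1)*b^2*(b ^ 2 ^ m)*(σ*u)*σ^2 + (-1)*b^2*(b ^ 2 ^ m)*(σ*u)^2*σ + (-1)*b^2*(b ^ 2 ^ m)^2*σ^2 + (-1)*b^2*(b ^ 2 ^ m)^2*(σ*u)*σ + (-1)*b^2*(b ^ 2 ^ m)^2*(σ*u)^2 + (-1)*b^2*(b ^ 2 ^ m)^3*σ + (-1)*b^2*(b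 ^ 2 ^ m)^3*(σ*u) + (-1)*b^3*(b ^ 2 ^ m)^2*σ + (-1)*b^3*(b ^ 2 ^ m)^2*(σ*u)) * h0
          rcases mul_eq_zero.mp hvv with hc | hc
          · have hv3 : (σ*u)^3 = b^(3*k) * b := by
              have h1 : (σ*u)^3 = b * b ^ 2 ^ m * b := by
                linear_combination hc - (b * b ^ 2 ^ m * b) * h0
              rw [h1, show 3*k = 2^m + 1 from hk.symm, pow_add, pow_one]
              ring
            exact hb (cube_helper1 hb0 hv3)
          · have hv3 : (σ*u)^3 = b^(3*(2*k-1)) * b^2 := by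
              have h1 : (σ*u)^3 = b * (b ^ 2 ^ m)^2 := by
                linear_combination hc - (b * (b ^ 2 ^ m)^2) * h0
              rw [h1, ← pow_mul, ← pow_succ', ← pow_add,
                show (2:ℕ)^m*2+1 = 3*(2*k-1)+2 from by omega]
            exact hb (cube_helper2 hb0 hv3)
  -- bilinearity
  have hadd : ∀ x y : GaloisField 2 (2 * m), h x + h (x + d) = β → h y + h (y + d) = β →
      h (x + y) + h (x + y + d) + h d = 0 := by
    intro x y hx hy
    rw [hform x, hform (x + d), frob_add x d] at hx
    rw [hform y, hform (y + d), frob_add y d] at hy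
    rw [hform (x + y), hform (x + y + d), hform d, frob_add (x+y) d, frob_add x y]
    linear_combination hx + hy + (β + (5)*(a ^ (2:ℕ) ^ m)*(b ^ (2:ℕ) ^ m)*(x ^ (2:ℕ) ^ m)*(y ^ (2:ℕ) ^ m)^4 + (a ^ (2:ℕ) ^ m)*(b ^ (2:ℕ) ^ m)*(x ^ (2:ℕ) ^ m)*y^4 + (10)*(a ^ (2:ℕ) ^ m)*(b ^ (2:ℕ) ^ m)*(x ^ (2:ℕ) ^ m)^2*(y ^ (2:ℕ) ^ m)^3 + (10)*(a ^ (2:ℕ) ^ m)*(b ^ (2:ℕ) ^ m)*(x ^ (2:ℕ) ^ m)^3*(y ^ (2:ℕ) ^ m)^2 + (5)*(a ^ (2:ℕ) ^ m)*(b ^ (2:ℕ) ^ m)*(x ^ (2:ℕ) ^ m)^4*(y ^ (2:ℕ) ^ m) + (4)*(a ^ (2:ℕ) ^ m)*(b ^ (2:ℕ) ^ m)*x*y^3*(y ^ (2:ℕ) ^ m) + (4)*(a ^ (2:ℕ) ^ m)*(b ^ (2:ℕ) ^ m)*x*(x ^ (2:ℕ) ^ m)*y^3 + (6)*(a ^ (2:ℕ)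 ^ m)*(b ^ (2:ℕ) ^ m)*x^2*y^2*(y ^ (2:ℕ) ^ m) + (6)*(a ^ (2:ℕ) ^ m)*(b ^ (2:ℕ) ^ m)*x^2*(x ^ (2:ℕ) ^ m)*y^2 + (4)*(a ^ (2:ℕ) ^ m)*(b ^ (2:ℕ) ^ m)*x^3*y*(y ^ (2:ℕ) ^ m) + (4)*(a ^ (2:ℕ) ^ m)*(b ^ (2:ℕ) ^ m)*x^3*(x ^ (2:ℕ) ^ m)*y + (a ^ (2:ℕ) ^ m)*(b ^ (2:ℕ) ^ m)*x^4*(y ^ (2:ℕ) ^ m) + (10)*(a ^ (2:ℕ) ^ m)*(b ^ (2:ℕ) ^ m)*(d ^ (2:ℕ) ^ m)*(x ^ (2:ℕ) ^ m)*(y ^ (2:ℕ) ^ m)^3 + (15)*(a ^ (2:ℕ) ^ m)*(b ^ (2:ℕ) ^ m)*(d ^ (2:ℕ) ^ m)*(x ^ (2:ℕ) ^ m)^2*(y ^ (2:ℕ) ^ m)^2 + (10)*(a ^ (2:ℕ) ^ m)*(b ^ (2:ℕ) ^ m)*(d ^ (2:ℕ) ^ m)*(x ^ (2:ℕ) ^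 m)^3*(y ^ (2:ℕ) ^ m) + (2)*(a ^ (2:ℕ) ^ m)*(b ^ (2:ℕ) ^ m)*(d ^ (2:ℕ) ^ m)*x*y^3 + (3)*(a ^ (2:ℕ) ^ m)*(b ^ (2:ℕ) ^ m)*(d ^ (2:ℕ) ^ m)*x^2*y^2 + (2)*(a ^ (2:ℕ) ^ m)*(b ^ (2:ℕ) ^ m)*(d ^ (2:ℕ) ^ m)*x^3*y + (15)*(a ^ (2:ℕ) ^ m)*(b ^ (2:ℕ) ^ m)*(d ^ (2:ℕ) ^ m)^2*(x ^ (2:ℕ) ^ m)*(y ^ (2:ℕ) ^ m)^2 + (15)*(a ^ (2:ℕ) ^ m)*(b ^ (2:ℕ) ^ m)*(d ^ (2:ℕ) ^ m)^2*(x ^ (2:ℕ) ^ m)^2*(y ^ (2:ℕ) ^ m) + (10)*(a ^ (2:ℕ) ^ m)*(b ^ (2:ℕ) ^ m)*(d ^ (2:ℕ) ^ m)^3*(x ^ (2:ℕ) ^ m)*(y ^ (2:ℕ) ^ m) + (2)*(a ^ (2:ℕ) ^ m)*(b ^ (2:ℕ) ^ m)*d*(x ^ (2:ℕ) ^ m)*y^3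 + (6)*(a ^ (2:ℕ) ^ m)*(b ^ (2:ℕ) ^ m)*d*x*y^2*(y ^ (2:ℕ) ^ m) + (6)*(a ^ (2:ℕ) ^ m)*(b ^ (2:ℕ) ^ m)*d*x*(x ^ (2:ℕ) ^ m)*y^2 + (6)*(a ^ (2:ℕ) ^ m)*(b ^ (2:ℕ) ^ m)*d*x^2*y*(y ^ (2:ℕ) ^ m) + (6)*(a ^ (2:ℕ) ^ m)*(b ^ (2:ℕ) ^ m)*d*x^2*(x ^ (2:ℕ) ^ m)*y + (2)*(a ^ (2:ℕ) ^ m)*(b ^ (2:ℕ) ^ m)*d*x^3*(y ^ (2:ℕ) ^ m) + (6)*(a ^ (2:ℕ) ^ m)*(b ^ (2:ℕ) ^ m)*d*(d ^ (2:ℕ) ^ m)*x*y^2 + (6)*(a ^ (2:ℕ) ^ m)*(b ^ (2:ℕ) ^ m)*d*(d ^ (2:ℕ) ^ m)*x^2*y + (3)*(a ^ (2:ℕ) ^ m)*(b ^ (2:ℕ) ^ m)*d^2*(x ^ (2:ℕ) ^ m)*y^2 + (6)*(a ^ (2:ℕ) ^ m)*(b ^ (2:ℕ) ^ m)*d^2*x*y*(y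 ^ (2:ℕ) ^ m) + (6)*(a ^ (2:ℕ) ^ m)*(b ^ (2:ℕ) ^ m)*d^2*x*(x ^ (2:ℕ) ^ m)*y + (3)*(a ^ (2:ℕ) ^ m)*(b ^ (2:ℕ) ^ m)*d^2*x^2*(y ^ (2:ℕ) ^ m) + (6)*(a ^ (2:ℕ) ^ m)*(b ^ (2:ℕ) ^ m)*d^2*(d ^ (2:ℕ) ^ m)*x*y + (2)*(a ^ (2:ℕ) ^ m)*(b ^ (2:ℕ) ^ m)*d^3*(x ^ (2:ℕ) ^ m)*y + (2)*(a ^ (2:ℕ) ^ m)*(b ^ (2:ℕ) ^ m)*d^3*x*(y ^ (2:ℕ) ^ m) + (4)*(a ^ (2:ℕ) ^ m)*b*(x ^ (2:ℕ) ^ m)*y*(y ^ (2:ℕ) ^ m)^3 + (6)*(a ^ (2:ℕ) ^ m)*b*(x ^ (2:ℕ) ^ m)^2*y*(y ^ (2:ℕ) ^ m)^2 + (4)*(a ^ (2:ℕ) ^ m)*b*(x ^ (2:ℕ) ^ m)^3*y*(y ^ (2:ℕ) ^ m) + (a ^ (2:ℕ) ^ m)*b*(x ^ (2:ℕ) ^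 m)^4*y + (a ^ (2:ℕ) ^ m)*b*x*(y ^ (2:ℕ) ^ m)^4 + (5)*(a ^ (2:ℕ) ^ m)*b*x*y^4 + (4)*(a ^ (2:ℕ) ^ m)*b*x*(x ^ (2:ℕ) ^ m)*(y ^ (2:ℕ) ^ m)^3 + (6)*(a ^ (2:ℕ) ^ m)*b*x*(x ^ (2:ℕ) ^ m)^2*(y ^ (2:ℕ) ^ m)^2 + (4)*(a ^ (2:ℕ) ^ m)*b*x*(x ^ (2:ℕ) ^ m)^3*(y ^ (2:ℕ) ^ m) + (10)*(a ^ (2:ℕ) ^ m)*b*x^2*y^3 + (10)*(a ^ (2:ℕ) ^ m)*b*x^3*y^2 + (5)*(a ^ (2:ℕ) ^ m)*b*x^4*y + (6)*(a ^ (2:ℕ) ^ m)*b*(d ^ (2:ℕ) ^ m)*(x ^ (2:ℕ) ^ m)*y*(y ^ (2:ℕ) ^ m)^2 + (6)*(a ^ (2:ℕ) ^ m)*b*(d ^ (2:ℕ) ^ m)*(x ^ (2:ℕ) ^ m)^2*y*(y ^ (2:ℕ) ^ m) + (2)*(a ^ (2:ℕ) ^ m)*b*(d ^ (2:ℕ)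 ^ m)*(x ^ (2:ℕ) ^ m)^3*y + (2)*(a ^ (2:ℕ) ^ m)*b*(d ^ (2:ℕ) ^ m)*x*(y ^ (2:ℕ) ^ m)^3 + (6)*(a ^ (2:ℕ) ^ m)*b*(d ^ (2:ℕ) ^ m)*x*(x ^ (2:ℕ) ^ m)*(y ^ (2:ℕ) ^ m)^2 + (6)*(a ^ (2:ℕ) ^ m)*b*(d ^ (2:ℕ) ^ m)*x*(x ^ (2:ℕ) ^ m)^2*(y ^ (2:ℕ) ^ m) + (6)*(a ^ (2:ℕ) ^ m)*b*(d ^ (2:ℕ) ^ m)^2*(x ^ (2:ℕ) ^ m)*y*(y ^ (2:ℕ) ^ m) + (3)*(a ^ (2:ℕ) ^ m)*b*(d ^ (2:ℕ) ^ m)^2*(x ^ (2:ℕ) ^ m)^2*y + (3)*(a ^ (2:ℕ) ^ m)*b*(d ^ (2:ℕ) ^ m)^2*x*(y ^ (2:ℕ) ^ m)^2 + (6)*(a ^ (2:ℕ) ^ m)*b*(d ^ (2:ℕ) ^ m)^2*x*(x ^ (2:ℕ) ^ m)*(y ^ (2:ℕ) ^ m) + (2)*(a ^ (2:ℕ) ^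 m)*b*(d ^ (2:ℕ) ^ m)^3*(x ^ (2:ℕ) ^ m)*y + (2)*(a ^ (2:ℕ) ^ m)*b*(d ^ (2:ℕ) ^ m)^3*x*(y ^ (2:ℕ) ^ m) + (2)*(a ^ (2:ℕ) ^ m)*b*d*(x ^ (2:ℕ) ^ m)*(y ^ (2:ℕ) ^ m)^3 + (3)*(a ^ (2:ℕ) ^ m)*b*d*(x ^ (2:ℕ) ^ m)^2*(y ^ (2:ℕ) ^ m)^2 + (2)*(a ^ (2:ℕ) ^ m)*b*d*(x ^ (2:ℕ) ^ m)^3*(y ^ (2:ℕ) ^ m) + (10)*(a ^ (2:ℕ) ^ m)*b*d*x*y^3 + (15)*(a ^ (2:ℕ) ^ m)*b*d*x^2*y^2 + (10)*(a ^ (2:ℕ) ^ m)*b*d*x^3*y + (6)*(a ^ (2:ℕ) ^ m)*b*d*(d ^ (2:ℕ) ^ m)*(x ^ (2:ℕ) ^ m)*(y ^ (2:ℕ) ^ m)^2 + (6)*(a ^ (2:ℕ) ^ m)*b*d*(d ^ (2:ℕ) ^ m)*(x ^ (2:ℕ) ^ m)^2*(y ^ (2:ℕ) ^ m) + (6)*(a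 ^ (2:ℕ) ^ m)*b*d*(d ^ (2:ℕ) ^ m)^2*(x ^ (2:ℕ) ^ m)*(y ^ (2:ℕ) ^ m) + (15)*(a ^ (2:ℕ) ^ m)*b*d^2*x*y^2 + (15)*(a ^ (2:ℕ) ^ m)*b*d^2*x^2*y + (10)*(a ^ (2:ℕ) ^ m)*b*d^3*x*y + (3)*a*(b ^ (2:ℕ) ^ m)*(x ^ (2:ℕ) ^ m)*(y ^ (2:ℕ) ^ m)^2 + (3)*a*(b ^ (2:ℕ) ^ m)*(x ^ (2:ℕ) ^ m)^2*(y ^ (2:ℕ) ^ m) + (3)*a*(b ^ (2:ℕ) ^ m)*(d ^ (2:ℕ) ^ m)*(x ^ (2:ℕ) ^ m)*(y ^ (2:ℕ) ^ m) + (3)*a*b*x*y^2 + (3)*a*b*x^2*y + (3)*a*b*d*x*y) * h0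
  -- conclude by counting
  by_contra hcon
  push_neg at hcon
  have hfin : ({x : GaloisField 2 (2 * m) | h x + h (x + d) = β}).Finite := Set.toFinite _
  obtain ⟨x1, hx1, x2, hx2, x3, hx3, h12, h13, h23⟩ := (Set.two_lt_ncard hfin).mp hcon
  have k12 := key (x1 + x2) (hadd x1 x2 hx1 hx2)
  have k13 := key (x1 + x3) (hadd x1 x3 hx1 hx3)
  have hne : ∀ u w : GaloisField 2 (2 * m), u ≠ w → u + w ≠ 0 := by
    intro u w huw hc
    exact huw (by linear_combination hc - w * h0)
  rcases k12 with h' | h12d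
  · exact absurd h' (hne x1 x2 h12)
  rcases k13 with h' | h13d
  · exact absurd h' (hne x1 x3 h13)
  have : x2 = x3 := by linear_combination h12d - h13d
  exact h23 this
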